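/- arXiv:1710.10097 — 3 statements merged into one kernel-verified Lean document; each statement's English description precedes it below -/
import Mathlib

section
/- Let G be a connected graph on n vertices that is not a tree. Then for every s ≥ 1 there exists an assignment of s×s real invertible matrix weights to the edges of G such that the rank of the associated Laplacian matrix L (formed from the inverses of the weights) is strictly less than (n−1)s. -/
open Matrix Module Finset

/-- Matrix-weighted Laplacian: each edge weight is replaced by its inverse. -/
noncomputable def matLap {n s : ℕ} (G : SimpleGraph (Fin n)) [DecidableRel G.Adj]
    (w : Sym2 (Fin n) → Matrix (Fin s) (Fin s) ℝ) :
    Matrix (Fin n × Fin s) (Fin n × Fin s) ℝ :=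
  Matrix.of fun p q =>
    if p.1 = q.1 then (∑ k ∈ G.neighborFinset p.1, (w (Sym2.mk p.1 k))⁻¹) p.2 q.2
    else if G.Adj p.1 q.1 then (-(w (Sym2.mk p.1 q.1))⁻¹) p.2 q.2
    else 0

lemma connected_deleteEdges_aux {V : Type*} {G : SimpleGraph V} {a b : V}
    (hG : G.Connected) (hr : (G.deleteEdges {s(a,b)}).Reachable a b) :
    (G.deleteEdges {s(a,b)}).Connected := by
  have hpre : ∀ {u v : V}, G.Walk u v → (G.deleteEdges {s(a,b)}).Reachable u v := by
    intro u v p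
    induction p with
    | nil => exact SimpleGraph.Reachable.refl _
    | @cons x y z h p ih =>
      refine SimpleGraph.Reachable.trans ?_ ih
      by_cases he : s(x, y) = s(a, b)
      · rw [Sym2.eq_iff] at he
        rcases he with ⟨rfl, rfl⟩ | ⟨rfl, rfl⟩
        · exact hr
        · exact hr.symm
      · exact SimpleGraph.Adj.reachable (by simp [SimpleGraph.deleteEdges_adj, h, he])
  haveI := hG.nonempty
  refine SimpleGraph.Connected.mk (fun u v => ?_)
  obtain ⟨p⟩ := hG.preconnected u v
  exact hpre p

lemma exists_nonbridge {V : Type*} {G : SimpleGraph V}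
    (hG : G.Connected) (hnt : ¬ G.IsTree) :
    ∃ a b : V, G.Adj a b ∧ (G.deleteEdges {s(a,b)}).Reachable a b := by
  have hnac : ¬ G.IsAcyclic := fun h => hnt ⟨hG, h⟩
  rw [SimpleGraph.isAcyclic_iff_forall_adj_isBridge] at hnac
  push_neg at hnac
  obtain ⟨a, b, hab, hbr⟩ := hnac
  rw [SimpleGraph.isBridge_iff] at hbr
  refine ⟨a, b, hab, ?_⟩
  by_contra hr
  exact hbr hr


lemma lap_col_sum_zero {n : ℕ} (G' : SimpleGraph (Fin n)) [DecidableRel G'.Adj] (j : Fin n) :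
    ∑ i, G'.lapMatrix ℝ i j = 0 := by
  have h1 : (G'.lapMatrix ℝ *ᵥ (fun _ => 1)) j = 0 := by
    rw [SimpleGraph.lapMatrix_mulVec_const_eq_zero]
    rfl
  simp only [mulVec, dotProduct, mul_one] at h1
  rw [← h1]
  refine Finset.sum_congr rfl (fun i _ => ?_)
  have := (SimpleGraph.isSymm_lapMatrix G' (R := ℝ)).apply i j
  simpa [Matrix.transpose_apply] using this.symm

lemma exists_lap_solution {n : ℕ} (G' : SimpleGraph (Fin n)) [DecidableRel G'.Adj]
    (hc : G'.Connected) {a b : Fin n} :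
    ∃ x : Fin n → ℝ, G'.lapMatrix ℝ *ᵥ x = Pi.single a 1 - Pi.single b 1 := by
  haveI : Nonempty (Fin n) := ⟨a⟩
  set A := G'.lapMatrix ℝ with hA
  set f := A.mulVecLin with hf
  set φ : (Fin n → ℝ) →ₗ[ℝ] ℝ := ∑ i, LinearMap.proj i with hφ
  have hφ_apply : ∀ y : Fin n → ℝ, φ y = ∑ i, y i := by
    intro y; simp [hφ]
  have hφ_surj : Function.Surjective φ := by
    intro c
    refine ⟨c • (Pi.single a 1 : Fin n → ℝ), ?_⟩
    rw [φ.map_smul, hφ_apply]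
    simp [Finset.sum_pi_single']
  -- finrank of ker φ
  have hφ_rank : finrank ℝ (LinearMap.range φ) = 1 := by
    rw [LinearMap.range_eq_top.mpr hφ_surj, finrank_top, finrank_self]
  have hrn : finrank ℝ (LinearMap.range φ) + finrank ℝ (LinearMap.ker φ) = n := by
    rw [LinearMap.finrank_range_add_finrank_ker, finrank_fin_fun]
  -- kernel of f is the constants
  have hker : LinearMap.ker f = Submodule.span ℝ {(fun _ => (1:ℝ) : Fin n → ℝ)} := by
    ext x
    rw [LinearMap.mem_ker, Submodule.mem_span_singleton]
    constructor
    · intro hx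
      have hx' : Matrix.toLin' A x = 0 := by rwa [Matrix.toLin'_apply]
      rw [Matrix.toLin'_apply, SimpleGraph.lapMatrix_mulVec_eq_zero_iff_forall_reachable] at hx'
      refine ⟨x a, funext fun i => ?_⟩
      have := hx' i a (hc.preconnected i a)
      simp [this]
    · rintro ⟨c, rfl⟩
      rw [f.map_smul]
      have : f (fun _ => (1:ℝ)) = 0 := by
        rw [hf, Matrix.mulVecLin_apply, SimpleGraph.lapMatrix_mulVec_const_eq_zero]
      rw [this, smul_zero]
  have hker_rank : finrank ℝ (LinearMap.ker f) = 1 := by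
    rw [hker]
    refine finrank_span_singleton ?_
    intro h
    have := congrFun h a
    simp at this
  have hfrank : finrank ℝ (LinearMap.range f) + 1 = n := by
    have := LinearMap.finrank_range_add_finrank_ker f
    rwa [hker_rank, finrank_fin_fun] at this
  have hle : LinearMap.range f ≤ LinearMap.ker φ := by
    rintro y ⟨x, rfl⟩
    rw [LinearMap.mem_ker, hφ_apply]
    have : f x = A *ᵥ x := rfl
    rw [this]
    simp only [mulVec, dotProduct]
    rw [Finset.sum_comm]
    refine Finset.sum_eq_zero (fun j _ => ?_)
    rw [← Finset.sum_mul, lap_col_sum_zero, zero_mul]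
  have heq : LinearMap.range f = LinearMap.ker φ :=
    Submodule.eq_of_le_of_finrank_le hle (by omega)
  have hmem : Pi.single a 1 - Pi.single b 1 ∈ LinearMap.ker φ := by
    rw [LinearMap.mem_ker, map_sub, hφ_apply, hφ_apply]
    simp [Finset.sum_pi_single']
  rw [← heq] at hmem
  obtain ⟨x, hx⟩ := hmem
  exact ⟨x, by rwa [hf, Matrix.mulVecLin_apply] at hx⟩

/-- Let `G` be a connected graph on `n` vertices that is not a tree. Then for
every `s ≥ 1` there exists an assignment of `s × s` real invertible matrix weights to the
edges of `G` such that the rank of the associated Laplacian (formed from the inverses of the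
weights) is strictly less than `(n-1)s`. -/
theorem exists_weights_rank_lt_of_not_tree {n : ℕ}
    (G : SimpleGraph (Fin n)) [DecidableRel G.Adj] (hG : G.Connected) (hnt : ¬ G.IsTree) :
    ∀ s : ℕ, 1 ≤ s →
      ∃ w : Sym2 (Fin n) → Matrix (Fin s) (Fin s) ℝ,
        (∀ e ∈ G.edgeSet, IsUnit (w e)) ∧ (matLap G w).rank < (n - 1) * s := by
  classical
  obtain ⟨a, b, hab, hreach⟩ := exists_nonbridge hG hnt
  have hne : a ≠ b := hab.ne
  set G' := G.deleteEdges {s(a,b)} with hG'def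
  haveI : DecidableRel G'.Adj := fun u v =>
    decidable_of_iff (G.Adj u v ∧ ¬ s(u,v) = s(a,b)) (by simp [hG'def])
  have hG'conn : G'.Connected := connected_deleteEdges_aux hG hreach
  obtain ⟨x₀, hx₀⟩ := exists_lap_solution G' hG'conn (a := a) (b := b)
  set bv : Fin n → ℝ := Pi.single a 1 - Pi.single b 1 with hbv
  have hbva : bv a = 1 := by simp [hbv, Pi.single_eq_of_ne hne]
  have hbvb : bv b = -1 := by simp [hbv, Pi.single_eq_of_ne hne.symm]
  have hbvo : ∀ i, i ≠ a → i ≠ b → bv i = 0 := by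
    intro i hia hib; simp [hbv, Pi.single_eq_of_ne hia, Pi.single_eq_of_ne hib]
  set q : ℝ := x₀ a - x₀ b with hqdef
  have hq : 0 < q := by
    have hpsd := SimpleGraph.posSemidef_lapMatrix ℝ G'
    have hdot : x₀ ⬝ᵥ (SimpleGraph.lapMatrix ℝ G' *ᵥ x₀) = q := by
      rw [hx₀, hqdef, hbv, dotProduct_sub, dotProduct_single, dotProduct_single]
      ring
    have h0 : 0 ≤ q := by
      have h2 := hpsd.dotProduct_mulVec_nonneg x₀
      rwa [star_trivial, hdot] at h2
    rcases h0.lt_or_eq with h | h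
    · exact h
    · exfalso
      have h3 : SimpleGraph.lapMatrix ℝ G' *ᵥ x₀ = 0 :=
        (hpsd.dotProduct_mulVec_zero_iff x₀).mp (by rw [star_trivial, hdot, ← h])
      rw [hx₀] at h3
      have h4 := congrFun h3 a
      rw [hbva] at h4
      norm_num at h4
  -- the G' identity
  have hx₀i : ∀ i, ∑ j ∈ G'.neighborFinset i, (x₀ i - x₀ j) = bv i := by
    intro i
    have h1 := congrFun hx₀ i
    rw [SimpleGraph.lapMatrix_mulVec_apply] at h1
    rw [Finset.sum_sub_distrib, Finset.sum_const, nsmul_eq_mul]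
    exact h1
  intro s hs
  set z : Fin s := ⟨0, hs⟩ with hz
  set t : ℝ := -q⁻¹ with ht
  have htq : t * q = -1 := by
    rw [ht, neg_mul, inv_mul_cancel₀ hq.ne']
  have htne : t ≠ 0 := by
    rw [ht, neg_ne_zero]
    exact inv_ne_zero hq.ne'
  set cval : Sym2 (Fin n) → ℝ := fun e => if e = s(a,b) then t else 1 with hcval
  have hcne : ∀ e, cval e ≠ 0 := by
    intro e; rw [hcval]; dsimp only; split
    · exact htne
    · exact one_ne_zero
  set dfun : Sym2 (Fin n) → Fin s → ℝ := fun e β => if β = z then cval e else 1 with hdfun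
  have hdne : ∀ e β, dfun e β ≠ 0 := by
    intro e β; rw [hdfun]; dsimp only; split
    · exact hcne e
    · exact one_ne_zero
  set w : Sym2 (Fin n) → Matrix (Fin s) (Fin s) ℝ := fun e => (Matrix.diagonal (dfun e))⁻¹
    with hw
  have hdiagunit : ∀ e, IsUnit (Matrix.diagonal (dfun e)) := by
    intro e
    rw [Matrix.isUnit_diagonal]
    exact IsUnit.of_mul_eq_one (fun β => (dfun e β)⁻¹)
      (funext fun β => mul_inv_cancel₀ (hdne e β))
  have hwunit : ∀ e, IsUnit (w e) := by
    intro e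
    rw [hw]; dsimp only
    rw [Matrix.isUnit_nonsing_inv_iff]
    exact hdiagunit e
  have hwinv : ∀ e, (w e)⁻¹ = Matrix.diagonal (dfun e) := by
    intro e
    rw [hw]; dsimp only
    exact Matrix.nonsing_inv_nonsing_inv _ ((Matrix.isUnit_iff_isUnit_det _).mp (hdiagunit e))
  -- key scalar identity
  have key : ∀ i, ∑ j ∈ G.neighborFinset i, cval s(i,j) * (x₀ i - x₀ j) = 0 := by
    intro i
    have hsplit : ∀ j : Fin n,
        (if G.Adj i j then cval s(i,j) * (x₀ i - x₀ j) else 0)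
          = (if G'.Adj i j then (x₀ i - x₀ j) else 0)
            + (if (i = a ∧ j = b) ∨ (i = b ∧ j = a) then t * (x₀ i - x₀ j) else 0) := by
      intro j
      by_cases hadj : G.Adj i j
      · by_cases he : s(i,j) = s(a,b)
        · have hG'adj : ¬ G'.Adj i j := by
            rw [hG'def]
            simp [SimpleGraph.deleteEdges_adj, he]
          have hcond : (i = a ∧ j = b) ∨ (i = b ∧ j = a) := by
            rwa [Sym2.eq_iff] at he
          rw [if_pos hadj, if_neg hG'adj, if_pos hcond, hcval]
          dsimp only
          rw [if_pos he, zero_add]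
        · have hG'adj : G'.Adj i j := by
            rw [hG'def]
            simp [SimpleGraph.deleteEdges_adj, hadj, he]
          have hcond : ¬ ((i = a ∧ j = b) ∨ (i = b ∧ j = a)) := fun hc =>
            he (Sym2.eq_iff.mpr hc)
          rw [if_pos hadj, if_pos hG'adj, if_neg hcond, add_zero, hcval]
          dsimp only
          rw [if_neg he, one_mul]
      · have hG'adj : ¬ G'.Adj i j := fun hc => hadj (by
          rw [hG'def, SimpleGraph.deleteEdges_adj] at hc
          exact hc.1)
        have hcond : ¬ ((i = a ∧ j = b) ∨ (i = b ∧ j = a)) := by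
          rintro (⟨rfl, rfl⟩ | ⟨rfl, rfl⟩)
          · exact hadj hab
          · exact hadj hab.symm
        rw [if_neg hadj, if_neg hG'adj, if_neg hcond, add_zero]
    rw [SimpleGraph.neighborFinset_eq_filter, Finset.sum_filter]
    have hstep : ∑ j, (if G.Adj i j then cval s(i,j) * (x₀ i - x₀ j) else 0)
        = bv i + ∑ j, (if (i = a ∧ j = b) ∨ (i = b ∧ j = a) then t * (x₀ i - x₀ j) else 0) := by
      rw [Finset.sum_congr rfl (fun j _ => hsplit j), Finset.sum_add_distrib]
      congr 1
      rw [← hx₀i i, SimpleGraph.neighborFinset_eq_filter, Finset.sum_filter]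
    rw [hstep]
    by_cases hia : i = a
    · have hterm : ∀ j : Fin n,
          (if (i = a ∧ j = b) ∨ (i = b ∧ j = a) then t * (x₀ i - x₀ j) else 0)
            = (if j = b then t * (x₀ i - x₀ j) else 0) := by
        intro j
        by_cases hj : j = b
        · rw [if_pos hj, if_pos (Or.inl ⟨hia, hj⟩)]
        · rw [if_neg hj, if_neg ?_]
          rintro (⟨-, h⟩ | ⟨h, -⟩)
          · exact hj h
          · exact hne (hia ▸ h)
      rw [Finset.sum_congr rfl (fun j _ => hterm j), Finset.sum_ite_eq' Finset.univ b
        (fun j => t * (x₀ i - x₀ j)), if_pos (Finset.mem_univ b), hia, hbva, ← hqdef, htq]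
      ring
    · by_cases hib : i = b
      · have hterm : ∀ j : Fin n,
            (if (i = a ∧ j = b) ∨ (i = b ∧ j = a) then t * (x₀ i - x₀ j) else 0)
              = (if j = a then t * (x₀ i - x₀ j) else 0) := by
          intro j
          by_cases hj : j = a
          · rw [if_pos hj, if_pos (Or.inr ⟨hib, hj⟩)]
          · rw [if_neg hj, if_neg ?_]
            rintro (⟨h, -⟩ | ⟨-, h⟩)
            · exact hia h
            · exact hj h
        rw [Finset.sum_congr rfl (fun j _ => hterm j), Finset.sum_ite_eq' Finset.univ a
          (fun j => t * (x₀ i - x₀ j)), if_pos (Finset.mem_univ a), hib, hbvb]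
        have h5 : t * (x₀ b - x₀ a) = 1 := by
          have h6 : x₀ b - x₀ a = -q := by rw [hqdef]; ring
          rw [h6, mul_neg, htq]
          norm_num
        rw [h5]
        ring
      · have hterm : ∀ j : Fin n,
            (if (i = a ∧ j = b) ∨ (i = b ∧ j = a) then t * (x₀ i - x₀ j) else 0) = 0 := by
          intro j
          rw [if_neg ?_]
          rintro (⟨h, -⟩ | ⟨h, -⟩)
          · exact hia h
          · exact hib h
        rw [Finset.sum_congr rfl (fun j _ => hterm j), Finset.sum_const_zero, hbvo i hia hib]
        ring
  -- mulVec formula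
  set M := matLap G w with hM
  have hMv : ∀ (y : Fin n × Fin s → ℝ) (i : Fin n) (β : Fin s),
      (M *ᵥ y) (i, β) = ∑ j ∈ G.neighborFinset i,
        dfun s(i,j) β * (y (i,β) - y (j,β)) := by
    intro y i β
    have hMe : ∀ (j : Fin n) (β' : Fin s), M (i,β) (j,β')
        = if i = j then (if β = β' then ∑ k ∈ G.neighborFinset i, dfun s(i,k) β else 0)
          else if G.Adj i j then (if β = β' then -(dfun s(i,j) β) else 0) else 0 := by
      intro j β'
      show (if i = j then (∑ k ∈ G.neighborFinset i, (w (Sym2.mk i k))⁻¹) β β'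
        else if G.Adj i j then (-(w (Sym2.mk i j))⁻¹) β β' else 0) = _
      by_cases hij : i = j
      · rw [if_pos hij, if_pos hij, Matrix.sum_apply]
        by_cases h : β = β'
        · rw [if_pos h]
          refine Finset.sum_congr rfl (fun k _ => ?_)
          rw [hwinv, Matrix.diagonal_apply, if_pos h]
        · rw [if_neg h]
          exact Finset.sum_eq_zero fun k _ => by
            rw [hwinv, Matrix.diagonal_apply, if_neg h]
      · rw [if_neg hij, if_neg hij]
        by_cases hadj : G.Adj i j
        · rw [if_pos hadj, if_pos hadj, Matrix.neg_apply, hwinv, Matrix.diagonal_apply]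
          by_cases h : β = β'
          · rw [if_pos h, if_pos h]
          · rw [if_neg h, if_neg h, neg_zero]
        · rw [if_neg hadj, if_neg hadj]
    rw [show (M *ᵥ y) (i,β) = ∑ p : Fin n × Fin s, M (i,β) p * y p from rfl,
      Fintype.sum_prod_type]
    have hinner : ∀ j : Fin n, (∑ β' : Fin s, M (i,β) (j,β') * y (j,β'))
        = if i = j then (∑ k ∈ G.neighborFinset i, dfun s(i,k) β) * y (j,β)
          else if G.Adj i j then -(dfun s(i,j) β) * y (j,β) else 0 := by
      intro j
      by_cases hij : i = j
      · rw [if_pos hij]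
        have h7 : ∀ β' : Fin s, M (i,β) (j,β') * y (j,β')
            = if β = β' then (∑ k ∈ G.neighborFinset i, dfun s(i,k) β) * y (j,β') else 0 := by
          intro β'
          rw [hMe j β', if_pos hij, ite_mul, zero_mul]
        rw [Finset.sum_congr rfl (fun β' _ => h7 β'),
          Finset.sum_ite_eq Finset.univ β
            (fun β' => (∑ k ∈ G.neighborFinset i, dfun s(i,k) β) * y (j,β')),
          if_pos (Finset.mem_univ β)]
      · rw [if_neg hij]
        by_cases hadj : G.Adj i j
        · rw [if_pos hadj]
          have h7 : ∀ β' : Fin s, M (i,β) (j,β') * y (j,β')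
              = if β = β' then -(dfun s(i,j) β) * y (j,β') else 0 := by
            intro β'
            rw [hMe j β', if_neg hij, if_pos hadj, ite_mul, zero_mul]
          rw [Finset.sum_congr rfl (fun β' _ => h7 β'),
            Finset.sum_ite_eq Finset.univ β (fun β' => -(dfun s(i,j) β) * y (j,β')),
            if_pos (Finset.mem_univ β)]
        · rw [if_neg hadj]
          apply Finset.sum_eq_zero
          intro β' _
          rw [hMe j β', if_neg hij, if_neg hadj, zero_mul]
    rw [Finset.sum_congr rfl (fun j _ => hinner j)]
    have hsplit2 : ∀ j : Fin n,
        (if i = j then (∑ k ∈ G.neighborFinset i, dfun s(i,k) β) * y (j,β)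
          else if G.Adj i j then -(dfun s(i,j) β) * y (j,β) else 0)
        = (if i = j then (∑ k ∈ G.neighborFinset i, dfun s(i,k) β) * y (j,β) else 0)
          + (if G.Adj i j then -(dfun s(i,j) β) * y (j,β) else 0) := by
      intro j
      by_cases hij : i = j
      · rw [if_pos hij, if_pos hij, if_neg (hij ▸ G.irrefl), add_zero]
      · rw [if_neg hij, if_neg hij, zero_add]
    rw [Finset.sum_congr rfl (fun j _ => hsplit2 j), Finset.sum_add_distrib,
      Finset.sum_ite_eq Finset.univ i
        (fun j => (∑ k ∈ G.neighborFinset i, dfun s(i,k) β) * y (j,β)),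
      if_pos (Finset.mem_univ i)]
    rw [SimpleGraph.neighborFinset_eq_filter, Finset.sum_filter, Finset.sum_filter,
      Finset.sum_mul, ← Finset.sum_add_distrib]
    refine Finset.sum_congr rfl (fun j _ => ?_)
    by_cases hadj : G.Adj i j
    · rw [if_pos hadj, if_pos hadj, if_pos hadj]
      ring
    · rw [if_neg hadj, if_neg hadj, if_neg hadj]
      ring
  -- kernel family
  set ψf : (Fin (s+1) → ℝ) → (Fin n × Fin s → ℝ) :=
    fun v p => v p.2.succ + (if p.2 = z then x₀ p.1 * v 0 else 0) with hψf
  have hkerψ : ∀ v, M *ᵥ (ψf v) = 0 := by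
    intro v
    funext p
    obtain ⟨i, β⟩ := p
    rw [hMv (ψf v) i β, Pi.zero_apply]
    by_cases hβ : β = z
    · have hterm : ∀ j : Fin n, dfun s(i,j) β * (ψf v (i,β) - ψf v (j,β))
          = (cval s(i,j) * (x₀ i - x₀ j)) * v 0 := by
        intro j
        have h1 : dfun s(i,j) β = cval s(i,j) := by
          rw [hdfun]
          dsimp only
          rw [if_pos hβ]
        have h2 : ψf v (i,β) - ψf v (j,β) = (x₀ i - x₀ j) * v 0 := by
          simp only [hψf, hβ, eq_self_iff_true, if_true]
          ring
        rw [h1, h2]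
        ring
      rw [Finset.sum_congr rfl (fun j _ => hterm j), ← Finset.sum_mul, key i, zero_mul]
    · refine Finset.sum_eq_zero (fun j _ => ?_)
      have h2 : ψf v (i,β) - ψf v (j,β) = 0 := by
        simp only [hψf, if_neg hβ]
        ring
      rw [h2, mul_zero]
  set ψ : (Fin (s+1) → ℝ) →ₗ[ℝ] (Fin n × Fin s → ℝ) :=
    { toFun := ψf
      map_add' := by
        intro u v; funext p
        by_cases hp : p.2 = z <;> simp [hψf, hp, mul_add] <;> ring
      map_smul' := by
        intro c v; funext p
        by_cases hp : p.2 = z <;> simp [hψf, hp, mul_add] <;> ring } with hψ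
  set ψ' : (Fin (s+1) → ℝ) →ₗ[ℝ] LinearMap.ker M.mulVecLin :=
    LinearMap.codRestrict _ ψ (fun v => by
      rw [LinearMap.mem_ker, Matrix.mulVecLin_apply]
      exact hkerψ v) with hψ'
  have hinj : Function.Injective ψ' := by
    rw [← LinearMap.ker_eq_bot, LinearMap.ker_eq_bot']
    intro v hv
    have h0 : ψf v = 0 := congrArg Subtype.val hv
    have h0' : ∀ p, ψf v p = 0 := fun p => congrFun h0 p
    have ha' := h0' (a, z)
    have hb' := h0' (b, z)
    simp only [hψf, if_pos rfl, if_true] at ha' hb'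
    have hv0 : v 0 = 0 := by
      have hsub : (x₀ a - x₀ b) * v 0 = 0 := by linear_combination ha' - hb'
      rcases mul_eq_zero.mp hsub with h | h
      · exact absurd h (by rw [← hqdef]; exact hq.ne')
      · exact h
    funext γ
    refine Fin.cases ?_ (fun β => ?_) γ
    · exact hv0
    · have := h0' (a, β)
      rw [hψf] at this; dsimp only at this
      rw [hv0] at this
      by_cases hβ : β = z
      · rw [if_pos hβ, mul_zero, add_zero] at this; exact this
      · rw [if_neg hβ, add_zero] at this; exact this
  haveI : FiniteDimensional ℝ (LinearMap.ker M.mulVecLin) := inferInstance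
  have hdim : s + 1 ≤ finrank ℝ (LinearMap.ker M.mulVecLin) := by
    have h1 := LinearMap.finrank_le_finrank_of_injective hinj
    rwa [finrank_fin_fun] at h1
  have hrk : M.rank + finrank ℝ (LinearMap.ker M.mulVecLin) = n * s := by
    rw [Matrix.rank, LinearMap.finrank_range_add_finrank_ker, finrank_pi]
    simp
  have hn2 : 2 ≤ n := by
    haveI : Nontrivial (Fin n) := ⟨a, b, hne⟩
    have := Fintype.one_lt_card_iff_nontrivial.mpr this
    simp at this; omega
  have hns : 2 * s ≤ n * s := Nat.mul_le_mul_right s hn2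
  have hsub : (n - 1) * s = n * s - s := by
    rw [Nat.sub_mul, one_mul]
  refine ⟨w, fun e _ => hwunit e, ?_⟩
  rw [← hM, hsub]
  omega
end

section
/- Let T be a tree on n vertices with s×s real matrix edge weights W_1,…,W_{n−1} such that the distance matrix D of T is invertible, and let L be the Laplacian matrix of T formed from the inverses of the weights. Then L·D·L = −2L. -/
open Matrix

section Helpers

variable {n s : ℕ} {G : SimpleGraph (Fin n)} [DecidableRel G.Adj]
  {w : Sym2 (Fin n) → Matrix (Fin s) (Fin s) ℝ}
  {D : Matrix (Fin n × Fin s) (Fin n × Fin s) ℝ}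

/-- Block column sums of the Laplacian vanish. -/
lemma matLap_colsum (a : Fin s) (j : Fin n) (b : Fin s) :
    ∑ k : Fin n, matLap G w (k, a) (j, b) = 0 := by
  have h1 : ∀ k : Fin n, matLap G w (k, a) (j, b) =
      (if k = j then ∑ m ∈ G.neighborFinset j, (w (Sym2.mk j m))⁻¹ a b else 0)
      + (if k ∈ G.neighborFinset j then -((w (Sym2.mk j k))⁻¹ a b) else 0) := by
    intro k
    simp only [matLap, Matrix.of_apply]
    by_cases hk : k = j
    · subst hk
      simp [Matrix.sum_apply, SimpleGraph.irrefl]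
    · rw [if_neg hk, if_neg hk]
      by_cases hadj : G.Adj k j
      · rw [if_pos hadj, if_pos (by rw [SimpleGraph.mem_neighborFinset]; exact hadj.symm),
          zero_add, Sym2.eq_swap]
        simp
      · rw [if_neg hadj,
          if_neg (by rw [SimpleGraph.mem_neighborFinset]; exact fun h' => hadj h'.symm)]
        simp
  rw [Finset.sum_congr rfl fun k _ => h1 k, Finset.sum_add_distrib]
  rw [Finset.sum_ite_eq' Finset.univ j
    (fun _ => ∑ m ∈ G.neighborFinset j, (w (Sym2.mk j m))⁻¹ a b),
    if_pos (Finset.mem_univ j), Finset.sum_ite_mem, Finset.univ_inter]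
  rw [← Finset.sum_add_distrib]
  simp

/-- One step of the distance matrix along an edge on a path. -/
lemma Dstep
    (hD : ∀ (i j : Fin n) (p : G.Walk i j), p.IsPath → ∀ a b,
      D (i, a) (j, b) = ((p.edges.map w).sum) a b)
    {i m j : Fin n} (h : G.Adj i m) (q : G.Walk m j)
    (hq : (SimpleGraph.Walk.cons h q).IsPath) (c b : Fin s) :
    D (i, c) (j, b) = (w (Sym2.mk i m)) c b + D (m, c) (j, b) := by
  rw [hD i j (SimpleGraph.Walk.cons h q) hq c b, hD m j q hq.of_cons c b]
  simp [SimpleGraph.Walk.edges_cons, Matrix.add_apply]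

lemma Dzero
    (hD : ∀ (i j : Fin n) (p : G.Walk i j), p.IsPath → ∀ a b,
      D (i, a) (j, b) = ((p.edges.map w).sum) a b)
    (i : Fin n) (c b : Fin s) : D (i, c) (i, b) = 0 := by
  rw [hD i i SimpleGraph.Walk.nil SimpleGraph.Walk.IsPath.nil c b]
  simp

/-- For each target `j`, there is a sign vector `ε` on the neighbors of `i` describing
the difference of distance-blocks, and its sum is the required scalar. -/
lemma eps_exists (hT : G.IsTree)
    (hD : ∀ (i j : Fin n) (p : G.Walk i j), p.IsPath → ∀ a b,
      D (i, a) (j, b) = ((p.edges.map w).sum) a b)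
    (i j : Fin n) :
    ∃ ε : Fin n → ℝ,
      (∀ m, ε m = 1 ∨ ε m = -1) ∧
      (∑ m ∈ G.neighborFinset i, ε m
        = if i = j then -(G.degree i : ℝ) else 2 - (G.degree i : ℝ)) ∧
      (∀ m ∈ G.neighborFinset i, ∀ c b,
        D (i, c) (j, b) - D (m, c) (j, b) = ε m * (w (Sym2.mk i m)) c b) := by
  by_cases hij : i = j
  · subst hij
    refine ⟨fun _ => -1, fun _ => Or.inr rfl, ?_, ?_⟩
    · rw [if_pos rfl]
      simp [SimpleGraph.card_neighborFinset_eq_degree]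
    · intro m hm c b
      rw [SimpleGraph.mem_neighborFinset] at hm
      have h1 : D (m, c) (i, b) = (w (Sym2.mk m i)) c b + D (i, c) (i, b) :=
        Dstep hD hm.symm SimpleGraph.Walk.nil (by
          rw [SimpleGraph.Walk.cons_isPath_iff]
          exact ⟨SimpleGraph.Walk.IsPath.nil, by simp [hm.ne, hm.ne']⟩) c b
      rw [h1, Dzero hD, Sym2.eq_swap]
      simp
  · -- j ≠ i : take the unique path, with pivot m0
    obtain ⟨p, hp, hup⟩ := hT.existsUnique_path i j
    cases p with
    | nil => exact absurd rfl hij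
    | cons h q =>
      rename_i m0
      have hm0 : G.Adj i m0 := h
      have hm0mem : m0 ∈ G.neighborFinset i := by
        rw [SimpleGraph.mem_neighborFinset]; exact hm0
      -- other neighbors are not on the path
      have hnot : ∀ m, G.Adj i m → m ≠ m0 → m ∉ (SimpleGraph.Walk.cons h q).support := by
        intro m him hmm0 hmem
        obtain ⟨p', hp', hup'⟩ := hT.existsUnique_path i m
        have h1 := hup' _ (hp.takeUntil hmem)
        have h2 := hup' (SimpleGraph.Walk.cons him SimpleGraph.Walk.nil) (by
          show (SimpleGraph.Walk.cons him SimpleGraph.Walk.nil).IsPath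
          rw [SimpleGraph.Walk.cons_isPath_iff]
          exact ⟨SimpleGraph.Walk.IsPath.nil, by simp [him.ne, him.ne']⟩)
        have hedge : Sym2.mk i m ∈ (SimpleGraph.Walk.cons h q).edges := by
          apply SimpleGraph.Walk.edges_takeUntil_subset (SimpleGraph.Walk.cons h q) hmem
          rw [h1.trans h2.symm]
          simp
        rw [SimpleGraph.Walk.edges_cons, List.mem_cons] at hedge
        rcases hedge with heq | hq' 
        · rcases Sym2.eq_iff.mp heq with ⟨-, h'⟩ | ⟨h1', -⟩
          · exact hmm0 h'
          · exact hm0.ne h1'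
        · exact ((SimpleGraph.Walk.cons_isPath_iff h q).mp hp).2
            (SimpleGraph.Walk.fst_mem_support_of_mem_edges q hq')
      refine ⟨fun m => if m = m0 then 1 else -1, fun m => by by_cases h : m = m0 <;> simp [h],
        ?_, ?_⟩
      · rw [if_neg hij]
        have : ∀ m ∈ G.neighborFinset i, (if m = m0 then (1:ℝ) else -1)
            = (if m = m0 then (2:ℝ) else 0) - 1 := by
          intro m _; by_cases h' : m = m0 <;> simp [h'] <;> norm_num
        rw [Finset.sum_congr rfl this, Finset.sum_sub_distrib,
          Finset.sum_ite_eq' _ m0 (fun _ => (2:ℝ)), if_pos hm0mem]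
        simp [SimpleGraph.card_neighborFinset_eq_degree]
      · intro m hm c b
        beta_reduce
        rw [SimpleGraph.mem_neighborFinset] at hm
        by_cases hmm0 : m = m0
        · subst hmm0
          rw [if_pos rfl, one_mul, Dstep hD h q hp c b]
          ring
        · rw [if_neg hmm0]
          have h1 : D (m, c) (j, b) = (w (Sym2.mk m i)) c b + D (i, c) (j, b) :=
            Dstep hD hm.symm (SimpleGraph.Walk.cons h q) (by
              rw [SimpleGraph.Walk.cons_isPath_iff]
              exact ⟨hp, hnot m hm hmm0⟩) c b
          rw [h1, Sym2.eq_swap]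
          ring

/-- Invertibility of `D` forces invertibility of every edge weight. -/
lemma edge_unit (hT : G.IsTree)
    (hD : ∀ (i j : Fin n) (p : G.Walk i j), p.IsPath → ∀ a b,
      D (i, a) (j, b) = ((p.edges.map w).sum) a b)
    (hDinv : IsUnit D) {i m : Fin n} (him : G.Adj i m) :
    IsUnit (w (Sym2.mk i m)) := by
  set W := w (Sym2.mk i m) with hW
  rw [Matrix.isUnit_iff_isUnit_det, isUnit_iff_ne_zero]
  intro hdet
  obtain ⟨v, hv0, hvW⟩ := (Matrix.exists_vecMul_eq_zero_iff).mpr hdet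
  set u : Fin n × Fin s → ℝ :=
    fun kc => (if kc.1 = i then v kc.2 else 0) - (if kc.1 = m then v kc.2 else 0) with hu
  have huD : u ᵥ* D = 0 := by
    funext jb
    obtain ⟨j, b⟩ := jb
    obtain ⟨ε, -, -, hεd⟩ := eps_exists hT hD i j
    have hεd' : ∀ c, D (i, c) (j, b) - D (m, c) (j, b) = ε m * W c b :=
      fun c => hεd m (by rw [SimpleGraph.mem_neighborFinset]; exact him) c b
    have : (u ᵥ* D) (j, b)
        = ∑ kc : Fin n × Fin s, u kc * D kc (j, b) := by
      simp [Matrix.vecMul, dotProduct]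
    rw [Pi.zero_apply, this, Fintype.sum_prod_type]
    have hterm : ∀ k : Fin n, ∑ c : Fin s, u (k, c) * D (k, c) (j, b)
        = (if k = i then ∑ c : Fin s, v c * D (i, c) (j, b) else 0)
          - (if k = m then ∑ c : Fin s, v c * D (m, c) (j, b) else 0) := by
      intro k
      by_cases hki : k = i
      · subst hki
        rw [if_pos rfl, if_neg him.ne]
        simp [hu, him.ne]
      · by_cases hkm : k = m
        · subst hkm
          rw [if_neg hki, if_pos rfl]
          simp [hu, hki]
        · rw [if_neg hki, if_neg hkm]
          simp [hu, hki, hkm]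
    rw [Finset.sum_congr rfl fun k _ => hterm k, Finset.sum_sub_distrib,
      Finset.sum_ite_eq' _ i, Finset.sum_ite_eq' _ m, if_pos (Finset.mem_univ i),
      if_pos (Finset.mem_univ m), ← Finset.sum_sub_distrib]
    have : ∀ c : Fin s, v c * D (i, c) (j, b) - v c * D (m, c) (j, b)
        = ε m * (v c * W c b) := by
      intro c
      rw [← mul_sub, hεd' c]; ring
    rw [Finset.sum_congr rfl fun c _ => this c, ← Finset.mul_sum]
    have : ∑ c : Fin s, v c * W c b = (v ᵥ* W) b := by
      simp [Matrix.vecMul, dotProduct]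
    rw [this, hvW]
    simp
  have hu0 : u = 0 := by
    set B : Matrix (Fin n × Fin s) (Fin n × Fin s) ℝ := ↑hDinv.unit⁻¹ with hB
    have hDB : D * B = 1 := hDinv.mul_val_inv
    calc u = u ᵥ* 1 := (Matrix.vecMul_one u).symm
      _ = u ᵥ* (D * B) := by rw [hDB]
      _ = (u ᵥ* D) ᵥ* B := by rw [Matrix.vecMul_vecMul]
      _ = 0 := by rw [huD, Matrix.zero_vecMul]
  obtain ⟨c0, hc0⟩ := Function.ne_iff.mp hv0
  have : u (i, c0) = 0 := by rw [hu0]; rfl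
  rw [hu] at this
  simp only [if_pos rfl, if_neg him.ne] at this
  simp at this
  exact hc0 this

/-- The key identity: each block of `L * D` is a scalar multiple of the identity. -/
lemma LD_entry (hT : G.IsTree)
    (hD : ∀ (i j : Fin n) (p : G.Walk i j), p.IsPath → ∀ a b,
      D (i, a) (j, b) = ((p.edges.map w).sum) a b)
    (hDinv : IsUnit D) (i j : Fin n) (a b : Fin s) :
    (matLap G w * D) (i, a) (j, b)
      = (if i = j then -(G.degree i : ℝ) else 2 - (G.degree i : ℝ))
        * (if a = b then 1 else 0) := by
  obtain ⟨ε, -, hεsum, hεd⟩ := eps_exists hT hD i j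
  rw [Matrix.mul_apply, Fintype.sum_prod_type]
  have hterm : ∀ k : Fin n,
      ∑ c : Fin s, matLap G w (i, a) (k, c) * D (k, c) (j, b)
      = (if k = i then
          ∑ m ∈ G.neighborFinset i, ∑ c : Fin s,
            (w (Sym2.mk i m))⁻¹ a c * D (i, c) (j, b) else 0)
        + (if k ∈ G.neighborFinset i then
          -(∑ c : Fin s, (w (Sym2.mk i k))⁻¹ a c * D (k, c) (j, b)) else 0) := by
    intro k
    by_cases hk : k = i
    · rw [if_pos hk,
        if_neg (by rw [hk, SimpleGraph.mem_neighborFinset]; exact fun h' => G.irrefl h'),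
        add_zero, hk]
      have hL : ∀ c : Fin s, matLap G w (i, a) (i, c)
          = ∑ m ∈ G.neighborFinset i, (w (Sym2.mk i m))⁻¹ a c := by
        intro c
        simp [matLap, Matrix.sum_apply]
      rw [Finset.sum_congr rfl fun c _ => by rw [hL c, Finset.sum_mul], Finset.sum_comm]
    · rw [if_neg hk]
      have hik : ¬ i = k := fun h' => hk h'.symm
      by_cases hadj : G.Adj i k
      · rw [if_pos (by rw [SimpleGraph.mem_neighborFinset]; exact hadj), zero_add]
        have hL : ∀ c : Fin s, matLap G w (i, a) (k, c)
            = -((w (Sym2.mk i k))⁻¹ a c) := by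
          intro c
          simp [matLap, hik, hadj]
        rw [Finset.sum_congr rfl fun c _ => by rw [hL c]]
        simp [Finset.sum_neg_distrib]
      · rw [if_neg (by rw [SimpleGraph.mem_neighborFinset]; exact hadj), zero_add]
        have hL : ∀ c : Fin s, matLap G w (i, a) (k, c) = 0 := by
          intro c
          simp [matLap, hik, hadj]
        rw [Finset.sum_congr rfl fun c _ => by rw [hL c]]
        simp
  rw [Finset.sum_congr rfl fun k _ => hterm k, Finset.sum_add_distrib,
    Finset.sum_ite_eq' _ i, if_pos (Finset.mem_univ i),
    Finset.sum_ite_mem, Finset.univ_inter, ← Finset.sum_add_distrib]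
  have hm' : ∀ m ∈ G.neighborFinset i,
      ((∑ c : Fin s, (w (Sym2.mk i m))⁻¹ a c * D (i, c) (j, b))
        + -(∑ c : Fin s, (w (Sym2.mk i m))⁻¹ a c * D (m, c) (j, b)))
      = ε m * (if a = b then (1:ℝ) else 0) := by
    intro m hm
    have hunit : IsUnit (w (Sym2.mk i m)) :=
      edge_unit hT hD hDinv (by rwa [← SimpleGraph.mem_neighborFinset])
    rw [← sub_eq_add_neg, ← Finset.sum_sub_distrib]
    have h1 : ∀ c : Fin s,
        (w (Sym2.mk i m))⁻¹ a c * D (i, c) (j, b)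
        - (w (Sym2.mk i m))⁻¹ a c * D (m, c) (j, b)
        = ε m * ((w (Sym2.mk i m))⁻¹ a c * (w (Sym2.mk i m)) c b) := by
      intro c
      rw [← mul_sub, hεd m hm c b]; ring
    rw [Finset.sum_congr rfl fun c _ => h1 c, ← Finset.mul_sum, ← Matrix.mul_apply,
      Matrix.nonsing_inv_mul _ ((Matrix.isUnit_iff_isUnit_det _).mp hunit), Matrix.one_apply]
  rw [Finset.sum_congr rfl hm', ← Finset.sum_mul, hεsum]

end Helpers

/-- Let `T` be a tree on `n` vertices with `s × s` real matrix edge weights such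
that the distance matrix `D` of `T` is invertible, and let `L` be the Laplacian formed from the
inverses of the weights.  Then `L · D · L = -2 L`. -/
theorem lap_mul_distanceMatrix_mul_lap {n s : ℕ}
    (G : SimpleGraph (Fin n)) [DecidableRel G.Adj] (hT : G.IsTree)
    (w : Sym2 (Fin n) → Matrix (Fin s) (Fin s) ℝ)
    (D : Matrix (Fin n × Fin s) (Fin n × Fin s) ℝ)
    (hD : ∀ (i j : Fin n) (p : G.Walk i j), p.IsPath →
      ∀ a b, D (i, a) (j, b) = ((p.edges.map w).sum) a b)
    (hDinv : IsUnit D) :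
    matLap G w * D * matLap G w = (-2 : ℝ) • matLap G w := by
  ext p q
  obtain ⟨i, a⟩ := p
  obtain ⟨j, b⟩ := q
  rw [Matrix.mul_apply, Fintype.sum_prod_type, Matrix.smul_apply, smul_eq_mul]
  have hterm : ∀ k : Fin n, ∀ c : Fin s,
      (matLap G w * D) (i, a) (k, c) * matLap G w (k, c) (j, b)
      = (if a = c then
          ((2 - (G.degree i : ℝ)) + (if k = i then -2 else 0))
            * matLap G w (k, c) (j, b) else 0) := by
    intro k c
    rw [LD_entry hT hD hDinv]
    by_cases hac : a = c
    · rw [if_pos hac, if_pos hac, mul_one]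
      congr 1
      by_cases hik : i = k
      · rw [if_pos hik, if_pos hik.symm]; ring
      · rw [if_neg hik, if_neg (fun h => hik h.symm)]; ring
    · rw [if_neg hac, if_neg hac, mul_zero, zero_mul]
  calc ∑ k : Fin n, ∑ c : Fin s,
        (matLap G w * D) (i, a) (k, c) * matLap G w (k, c) (j, b)
      = ∑ k : Fin n, ∑ c : Fin s, (if a = c then
          ((2 - (G.degree i : ℝ)) + (if k = i then -2 else 0))
            * matLap G w (k, c) (j, b) else 0) := by
        exact Finset.sum_congr rfl fun k _ => Finset.sum_congr rfl fun c _ => hterm k c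
    _ = ∑ k : Fin n, ((2 - (G.degree i : ℝ)) + (if k = i then -2 else 0))
          * matLap G w (k, a) (j, b) := by
        refine Finset.sum_congr rfl fun k _ => ?_
        rw [Finset.sum_ite_eq _ a, if_pos (Finset.mem_univ a)]
    _ = -2 * matLap G w (i, a) (j, b) := by
        have : ∀ k : Fin n, ((2 - (G.degree i : ℝ)) + (if k = i then -2 else 0))
            * matLap G w (k, a) (j, b)
            = (2 - (G.degree i : ℝ)) * matLap G w (k, a) (j, b)
              + (if k = i then -2 * matLap G w (k, a) (j, b) else 0) := by
          intro k
          by_cases hk : k = i <;> simp [hk] <;> ring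
        rw [Finset.sum_congr rfl fun k _ => this k, Finset.sum_add_distrib,
          ← Finset.mul_sum, matLap_colsum, mul_zero, zero_add]
        have := Finset.sum_ite_eq' Finset.univ i
          (fun k => -2 * matLap G w (k, a) (j, b))
        rw [Finset.sum_congr rfl (fun k _ => rfl), this, if_pos (Finset.mem_univ i)]
end

section
/- Let T be a tree on n vertices with s×s real matrix edge weights W_1,…,W_{n−1} such that the distance matrix D of T is invertible, and let L be the Laplacian matrix of T formed from the inverses of the weights. Let J denote the n×n all-ones matrix. Then D^{-1} − L is invertible and (D^{-1} − L)^{-1} = (1/3)D + (1/3) J ⊗ (∑_{i=1}^{n−1} W_i). -/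
open Matrix
open scoped Kronecker

namespace TreeDistAux
set_option linter.unusedSectionVars false

open SimpleGraph

variable {n s : ℕ} {G : SimpleGraph (Fin n)}

noncomputable def tw (hT : G.IsTree) (i j : Fin n) : G.Walk i j :=
  (hT.existsUnique_path i j).choose

lemma tw_isPath (hT : G.IsTree) (i j : Fin n) : (tw hT i j).IsPath :=
  (hT.existsUnique_path i j).choose_spec.1

lemma tw_unique (hT : G.IsTree) {i j : Fin n} (p : G.Walk i j) (hp : p.IsPath) :
    p = tw hT i j :=
  (hT.existsUnique_path i j).choose_spec.2 p hp

variable (w : Sym2 (Fin n) → Matrix (Fin s) (Fin s) ℝ)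

noncomputable def dd (hT : G.IsTree) (i j : Fin n) : Matrix (Fin s) (Fin s) ℝ :=
  ((tw hT i j).edges.map w).sum

lemma dd_self (hT : G.IsTree) (i : Fin n) : dd w hT i i = 0 := by
  have : (SimpleGraph.Walk.nil : G.Walk i i) = tw hT i i :=
    tw_unique hT _ SimpleGraph.Walk.IsPath.nil
  simp [dd, ← this]

lemma dd_symm (hT : G.IsTree) (i j : Fin n) : dd w hT i j = dd w hT j i := by
  have : (tw hT i j).reverse = tw hT j i :=
    tw_unique hT _ ((tw_isPath hT i j).reverse)
  rw [dd, dd, ← this, SimpleGraph.Walk.edges_reverse, List.map_reverse, List.sum_reverse]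

lemma dd_adj (hT : G.IsTree) {i k : Fin n} (h : G.Adj i k) :
    dd w hT i k = w (Sym2.mk i k) := by
  have : (SimpleGraph.Walk.cons h SimpleGraph.Walk.nil) = tw hT i k := by
    apply tw_unique
    simp [SimpleGraph.Walk.cons_isPath_iff, h.ne]
  simp [dd, ← this]

lemma dichotomy (hT : G.IsTree) {a b : Fin n} (h : G.Adj a b) (j : Fin n) :
    tw hT a j = SimpleGraph.Walk.cons h (tw hT b j) ∨
      tw hT b j = SimpleGraph.Walk.cons h.symm (tw hT a j) := by
  by_cases ha : a ∈ (tw hT b j).support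
  · right
    have hts := ((tw hT b j).take_spec ha).symm
    have htake : (tw hT b j).takeUntil a ha = SimpleGraph.Walk.cons h.symm SimpleGraph.Walk.nil := by
      rw [tw_unique hT _ ((tw_isPath hT b j).takeUntil ha)]
      symm
      apply tw_unique
      simp [SimpleGraph.Walk.cons_isPath_iff, h.ne']
    have hdrop : (tw hT b j).dropUntil a ha = tw hT a j :=
      tw_unique hT _ ((tw_isPath hT b j).dropUntil ha)
    rw [hts, htake, hdrop]
    simp [SimpleGraph.Walk.cons_append]
  · left
    symm
    apply tw_unique
    rw [SimpleGraph.Walk.cons_isPath_iff]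
    exact ⟨tw_isPath hT b j, ha⟩

lemma dd_dichotomy (hT : G.IsTree) {a b : Fin n} (h : G.Adj a b) (j : Fin n) :
    dd w hT a j = w (Sym2.mk a b) + dd w hT b j ∨
      dd w hT b j = w (Sym2.mk a b) + dd w hT a j := by
  rcases dichotomy hT h j with hc | hc
  · left; rw [dd, hc]; simp [dd]
  · right; rw [dd, dd, hc]; simp [Sym2.eq_swap (a := b) (b := a)]

lemma exists_second (hT : G.IsTree) {i j : Fin n} (hij : i ≠ j) :
    ∃ k0, ∃ _h : G.Adj i k0,
      dd w hT i j = w (Sym2.mk i k0) + dd w hT k0 j ∧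
      ∀ k, G.Adj i k → k ≠ k0 → dd w hT k j = w (Sym2.mk i k) + dd w hT i j := by
  obtain ⟨k0, h, q, hq⟩ := SimpleGraph.Walk.exists_eq_cons_of_ne hij (tw hT i j)
  have hqpath : q.IsPath := by
    have := tw_isPath hT i j
    rw [hq] at this
    exact this.of_cons
  have hqtw : q = tw hT k0 j := tw_unique hT q hqpath
  refine ⟨k0, h, ?_, ?_⟩
  · rw [dd, hq, dd, ← hqtw]; simp
  · intro k hk hkk0
    rcases dichotomy hT hk j with hc | hc
    · exfalso
      apply hkk0
      have h2 := hq.symm.trans hc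
      have := congrArg (fun p => p.getVert 1) h2
      simpa [SimpleGraph.Walk.getVert_cons_succ, SimpleGraph.Walk.getVert_zero] using this.symm
    · rw [dd, dd, hc]
      simp [Sym2.eq_swap (a := k) (b := i)]

lemma w_unit (hT : G.IsTree)
    (D : Matrix (Fin n × Fin s) (Fin n × Fin s) ℝ)
    (hDd : ∀ (i j : Fin n) (a b : Fin s), D (i, a) (j, b) = dd w hT i j a b)
    (hDinv : IsUnit D) {a b : Fin n} (h : G.Adj a b) :
    IsUnit (w (Sym2.mk a b)) := by
  rw [Matrix.isUnit_iff_isUnit_det, isUnit_iff_ne_zero]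
  intro hdet
  obtain ⟨x, hx0, hxw⟩ := Matrix.exists_vecMul_eq_zero_iff.mpr hdet
  set u : (Fin n × Fin s) → ℝ :=
    fun p => if p.1 = a then x p.2 else if p.1 = b then -x p.2 else 0 with hu
  have hdiff : ∀ j : Fin n,
      x ᵥ* (dd w hT a j - dd w hT b j) = 0 := by
    intro j
    rcases dd_dichotomy w hT h j with hc | hc
    · have : dd w hT a j - dd w hT b j = w (Sym2.mk a b) := by
        rw [hc, add_sub_cancel_right]
      rw [this, hxw]
    · have : dd w hT a j - dd w hT b j = -(w (Sym2.mk a b)) := by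
        rw [hc]; abel
      rw [this, Matrix.vecMul_neg, hxw, neg_zero]
  have huD : u ᵥ* D = 0 := by
    funext q
    obtain ⟨j, c⟩ := q
    have expand : (u ᵥ* D) (j, c) = ∑ m : Fin n, ∑ e : Fin s, u (m, e) * D (m, e) (j, c) := by
      simp [Matrix.vecMul, dotProduct, Fintype.sum_prod_type]
    rw [expand]
    have inner : ∀ m : Fin n, ∑ e : Fin s, u (m, e) * D (m, e) (j, c) =
        (if m = a then (x ᵥ* dd w hT a j) c else 0)
          + (if m = b then -((x ᵥ* dd w hT b j) c) else 0) := by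
      intro m
      by_cases hma : m = a
      · subst hma
        rw [if_pos rfl, if_neg h.ne, add_zero]
        rw [Matrix.vecMul, dotProduct]
        refine Finset.sum_congr rfl fun e _ => ?_
        rw [hDd]
        simp [hu]
      · by_cases hmb : m = b
        · subst hmb
          rw [if_neg hma, if_pos rfl, zero_add]
          rw [Matrix.vecMul, dotProduct, ← Finset.sum_neg_distrib]
          refine Finset.sum_congr rfl fun e _ => ?_
          rw [hDd]
          simp [hu, hma]
        · rw [if_neg hma, if_neg hmb, add_zero]
          apply Finset.sum_eq_zero
          intro e _
          simp [hu, hma, hmb]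
    rw [Finset.sum_congr rfl fun m _ => inner m, Finset.sum_add_distrib,
      Finset.sum_ite_eq' Finset.univ a, Finset.sum_ite_eq' Finset.univ b]
    have := congrFun (hdiff j) c
    rw [Matrix.vecMul_sub] at this
    simp only [Pi.zero_apply, Finset.mem_univ, if_true]
    simpa [sub_eq_add_neg] using this
  have hu0 : u = 0 := by
    have h1 : u = (u ᵥ* D) ᵥ* D⁻¹ := by
      rw [Matrix.vecMul_vecMul,
        Matrix.mul_nonsing_inv _ ((Matrix.isUnit_iff_isUnit_det D).mp hDinv),
        Matrix.vecMul_one]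
    rw [h1, huD, Matrix.zero_vecMul]
  apply hx0
  funext e
  have := congrFun hu0 (a, e)
  simpa [hu] using this

variable (G) in
noncomputable def Lb [DecidableRel G.Adj] (i k : Fin n) : Matrix (Fin s) (Fin s) ℝ :=
  if i = k then ∑ m ∈ G.neighborFinset i, (w (Sym2.mk i m))⁻¹
  else if G.Adj i k then -(w (Sym2.mk i k))⁻¹ else 0

variable [DecidableRel G.Adj]

lemma nbr_subset_erase (i : Fin n) : G.neighborFinset i ⊆ Finset.univ.erase i := by
  intro k hk
  rw [SimpleGraph.mem_neighborFinset] at hk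
  exact Finset.mem_erase.mpr ⟨hk.ne', Finset.mem_univ k⟩

lemma Lb_row_sum (i : Fin n) : ∑ k, Lb G w i k = 0 := by
  rw [← Finset.sum_erase_add _ _ (Finset.mem_univ i)]
  have h1 : ∑ k ∈ Finset.univ.erase i, Lb G w i k
      = ∑ k ∈ G.neighborFinset i, Lb G w i k := by
    symm
    apply Finset.sum_subset (nbr_subset_erase i)
    intro k hk hnk
    rw [SimpleGraph.mem_neighborFinset] at hnk
    rw [Lb, if_neg (Finset.ne_of_mem_erase hk).symm, if_neg hnk]
  have h2 : ∀ k ∈ G.neighborFinset i, Lb G w i k = -(w (Sym2.mk i k))⁻¹ := by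
    intro k hk
    rw [SimpleGraph.mem_neighborFinset] at hk
    rw [Lb, if_neg hk.ne, if_pos hk]
  rw [h1, Finset.sum_congr rfl h2, Lb, if_pos rfl]
  simp

lemma Lb_col_sum (j : Fin n) : ∑ k, Lb G w k j = 0 := by
  rw [← Finset.sum_erase_add _ _ (Finset.mem_univ j)]
  have h1 : ∑ k ∈ Finset.univ.erase j, Lb G w k j
      = ∑ k ∈ G.neighborFinset j, Lb G w k j := by
    symm
    apply Finset.sum_subset (nbr_subset_erase j)
    intro k hk hnk
    rw [SimpleGraph.mem_neighborFinset] at hnk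
    rw [Lb, if_neg (Finset.ne_of_mem_erase hk), if_neg fun h => hnk h.symm]
  have h2 : ∀ k ∈ G.neighborFinset j, Lb G w k j = -(w (Sym2.mk j k))⁻¹ := by
    intro k hk
    rw [SimpleGraph.mem_neighborFinset] at hk
    rw [Lb, if_neg hk.ne', if_pos hk.symm, Sym2.eq_swap]
  rw [h1, Finset.sum_congr rfl h2, Lb, if_pos rfl]
  simp

lemma Lb_mul_dd (hT : G.IsTree)
    (hw : ∀ {a b : Fin n}, G.Adj a b → IsUnit (w (Sym2.mk a b))) (i j : Fin n) :
    ∑ k, Lb G w i k * dd w hT k j =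
      ((if i = j then (0 : ℝ) else 2) - (G.degree i : ℝ)) • (1 : Matrix (Fin s) (Fin s) ℝ) := by
  rw [← Finset.sum_erase_add _ _ (Finset.mem_univ i)]
  have h1 : ∑ k ∈ Finset.univ.erase i, Lb G w i k * dd w hT k j
      = ∑ k ∈ G.neighborFinset i, Lb G w i k * dd w hT k j := by
    symm
    apply Finset.sum_subset (nbr_subset_erase i)
    intro k hk hnk
    rw [SimpleGraph.mem_neighborFinset] at hnk
    rw [Lb, if_neg (Finset.ne_of_mem_erase hk).symm, if_neg hnk, Matrix.zero_mul]
  have h2 : ∀ k ∈ G.neighborFinset i, Lb G w i k * dd w hT k j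
      = -((w (Sym2.mk i k))⁻¹ * dd w hT k j) := by
    intro k hk
    rw [SimpleGraph.mem_neighborFinset] at hk
    rw [Lb, if_neg hk.ne, if_pos hk, Matrix.neg_mul]
  have h3 : Lb G w i i * dd w hT i j
      = ∑ k ∈ G.neighborFinset i, (w (Sym2.mk i k))⁻¹ * dd w hT i j := by
    rw [Lb, if_pos rfl, Finset.sum_mul]
  rw [h1, Finset.sum_congr rfl h2, h3, ← Finset.sum_add_distrib]
  have h4 : ∀ k ∈ G.neighborFinset i,
      -((w (Sym2.mk i k))⁻¹ * dd w hT k j) + (w (Sym2.mk i k))⁻¹ * dd w hT i j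
        = (w (Sym2.mk i k))⁻¹ * (dd w hT i j - dd w hT k j) := by
    intro k _
    rw [Matrix.mul_sub]
    abel
  rw [Finset.sum_congr rfl h4]
  by_cases hij : i = j
  · subst hij
    rw [if_pos rfl]
    have h5 : ∀ k ∈ G.neighborFinset i,
        (w (Sym2.mk i k))⁻¹ * (dd w hT i i - dd w hT k i)
          = -(1 : Matrix (Fin s) (Fin s) ℝ) := by
      intro k hk
      rw [SimpleGraph.mem_neighborFinset] at hk
      rw [dd_self, dd_symm w hT k i, dd_adj w hT hk, zero_sub, Matrix.mul_neg,
        Matrix.nonsing_inv_mul _ ((Matrix.isUnit_iff_isUnit_det _).mp (hw hk))]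
    rw [Finset.sum_congr rfl h5, Finset.sum_const, SimpleGraph.card_neighborFinset_eq_degree,
      zero_sub, neg_smul, smul_neg, Nat.cast_smul_eq_nsmul]
  · rw [if_neg hij]
    obtain ⟨k0, hk0adj, hk0, hothers⟩ := exists_second w hT hij
    have h5 : ∀ k ∈ G.neighborFinset i,
        (w (Sym2.mk i k))⁻¹ * (dd w hT i j - dd w hT k j)
          = (if k = k0 then (2 : Matrix (Fin s) (Fin s) ℝ) else 0)
              - (1 : Matrix (Fin s) (Fin s) ℝ) := by
      intro k hk
      rw [SimpleGraph.mem_neighborFinset] at hk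
      by_cases hkk0 : k = k0
      · subst hkk0
        rw [if_pos rfl, hk0, add_sub_cancel_right,
          Matrix.nonsing_inv_mul _ ((Matrix.isUnit_iff_isUnit_det _).mp (hw hk))]
        norm_num
      · rw [if_neg hkk0, hothers k hk hkk0]
        have : dd w hT i j - (w (Sym2.mk i k) + dd w hT i j) = -(w (Sym2.mk i k)) := by
          abel
        rw [this, Matrix.mul_neg,
          Matrix.nonsing_inv_mul _ ((Matrix.isUnit_iff_isUnit_det _).mp (hw hk)), zero_sub]
    rw [Finset.sum_congr rfl h5, Finset.sum_sub_distrib, Finset.sum_ite_eq' _ k0,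
      if_pos ((SimpleGraph.mem_neighborFinset G i k0).mpr hk0adj), Finset.sum_const,
      SimpleGraph.card_neighborFinset_eq_degree, sub_smul, Nat.cast_smul_eq_nsmul]
    congr 1
    rw [show ((2:ℝ)) = ((2:ℕ):ℝ) by norm_num, Nat.cast_smul_eq_nsmul]
    rw [show ((2:Matrix (Fin s) (Fin s) ℝ)) = 1 + 1 by norm_num]
    rw [two_nsmul]

lemma dd_mul_Lb (hT : G.IsTree)
    (hw : ∀ {a b : Fin n}, G.Adj a b → IsUnit (w (Sym2.mk a b))) (i j : Fin n) :
    ∑ k, dd w hT i k * Lb G w k j =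
      ((if i = j then (0 : ℝ) else 2) - (G.degree j : ℝ)) • (1 : Matrix (Fin s) (Fin s) ℝ) := by
  rw [← Finset.sum_erase_add _ _ (Finset.mem_univ j)]
  have h1 : ∑ k ∈ Finset.univ.erase j, dd w hT i k * Lb G w k j
      = ∑ k ∈ G.neighborFinset j, dd w hT i k * Lb G w k j := by
    symm
    apply Finset.sum_subset (nbr_subset_erase j)
    intro k hk hnk
    rw [SimpleGraph.mem_neighborFinset] at hnk
    rw [Lb, if_neg (Finset.ne_of_mem_erase hk), if_neg fun h => hnk h.symm, Matrix.mul_zero]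
  have h2 : ∀ k ∈ G.neighborFinset j, dd w hT i k * Lb G w k j
      = -(dd w hT i k * (w (Sym2.mk j k))⁻¹) := by
    intro k hk
    rw [SimpleGraph.mem_neighborFinset] at hk
    rw [Lb, if_neg hk.ne', if_pos hk.symm, Sym2.eq_swap, Matrix.mul_neg]
  have h3 : dd w hT i j * Lb G w j j
      = ∑ k ∈ G.neighborFinset j, dd w hT i j * (w (Sym2.mk j k))⁻¹ := by
    rw [Lb, if_pos rfl, Finset.mul_sum]
  rw [h1, Finset.sum_congr rfl h2, h3, ← Finset.sum_add_distrib]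
  have h4 : ∀ k ∈ G.neighborFinset j,
      -(dd w hT i k * (w (Sym2.mk j k))⁻¹) + dd w hT i j * (w (Sym2.mk j k))⁻¹
        = (dd w hT i j - dd w hT i k) * (w (Sym2.mk j k))⁻¹ := by
    intro k _
    rw [Matrix.sub_mul]
    abel
  rw [Finset.sum_congr rfl h4]
  by_cases hij : i = j
  · subst hij
    rw [if_pos rfl]
    have h5 : ∀ k ∈ G.neighborFinset i,
        (dd w hT i i - dd w hT i k) * (w (Sym2.mk i k))⁻¹
          = -(1 : Matrix (Fin s) (Fin s) ℝ) := by
      intro k hk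
      rw [SimpleGraph.mem_neighborFinset] at hk
      rw [dd_self, dd_adj w hT hk, zero_sub, Matrix.neg_mul,
        Matrix.mul_nonsing_inv _ ((Matrix.isUnit_iff_isUnit_det _).mp (hw hk))]
    rw [Finset.sum_congr rfl h5, Finset.sum_const, SimpleGraph.card_neighborFinset_eq_degree,
      zero_sub, neg_smul, smul_neg, Nat.cast_smul_eq_nsmul]
  · rw [if_neg hij]
    obtain ⟨k0, hk0adj, hk0, hothers⟩ := exists_second w hT (Ne.symm hij)
    have h5 : ∀ k ∈ G.neighborFinset j,
        (dd w hT i j - dd w hT i k) * (w (Sym2.mk j k))⁻¹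
          = (if k = k0 then (2 : Matrix (Fin s) (Fin s) ℝ) else 0)
              - (1 : Matrix (Fin s) (Fin s) ℝ) := by
      intro k hk
      rw [SimpleGraph.mem_neighborFinset] at hk
      by_cases hkk0 : k = k0
      · subst hkk0
        have hdiff : dd w hT i j - dd w hT i k = w (Sym2.mk j k) := by
          rw [dd_symm w hT i j, dd_symm w hT i k, hk0, add_sub_cancel_right]
        rw [if_pos rfl, hdiff,
          Matrix.mul_nonsing_inv _ ((Matrix.isUnit_iff_isUnit_det _).mp (hw hk))]
        norm_num
      · have hdiff : dd w hT i j - dd w hT i k = -(w (Sym2.mk j k)) := by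
          rw [dd_symm w hT i j, dd_symm w hT i k, hothers k hk hkk0]
          abel
        rw [if_neg hkk0, hdiff, Matrix.neg_mul,
          Matrix.mul_nonsing_inv _ ((Matrix.isUnit_iff_isUnit_det _).mp (hw hk)), zero_sub]
    rw [Finset.sum_congr rfl h5, Finset.sum_sub_distrib, Finset.sum_ite_eq' _ k0,
      if_pos ((SimpleGraph.mem_neighborFinset G j k0).mpr hk0adj), Finset.sum_const,
      SimpleGraph.card_neighborFinset_eq_degree, sub_smul, Nat.cast_smul_eq_nsmul]
    congr 1
    rw [show ((2:ℝ)) = ((2:ℕ):ℝ) by norm_num, Nat.cast_smul_eq_nsmul]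
    rw [show ((2:Matrix (Fin s) (Fin s) ℝ)) = 1 + 1 by norm_num]
    rw [two_nsmul]

/-- A dart points "away from `i`": its first vertex is farther from `i`. -/
def Far (hT : G.IsTree) (i : Fin n) (d : G.Dart) : Prop :=
  dd w hT i d.fst = w d.edge + dd w hT i d.snd

lemma far_total (hT : G.IsTree) (i : Fin n) (d : G.Dart) :
    Far w hT i d ∨ Far w hT i d.symm := by
  rcases dd_dichotomy w hT d.adj i with hc | hc
  · left
    rw [Far, dd_symm w hT i d.fst, dd_symm w hT i d.snd]
    exact hc
  · right
    rw [Far, dd_symm w hT i d.symm.fst, dd_symm w hT i d.symm.snd, Dart.edge_symm,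
      Dart.symm_toProd, Prod.fst_swap, Prod.snd_swap]
    exact hc

lemma edge_w_add_self_ne_zero (_hT : G.IsTree)
    (hw : ∀ {a b : Fin n}, G.Adj a b → IsUnit (w (Sym2.mk a b)))
    (hnt : (1 : Matrix (Fin s) (Fin s) ℝ) ≠ 0) (d : G.Dart) :
    w d.edge + w d.edge ≠ 0 := by
  intro hww
  have hw0 : w d.edge = 0 := by
    have h3 : (2 : ℝ) • w d.edge = 0 := by rw [two_smul]; exact hww
    have := congrArg (fun M => ((2 : ℝ)⁻¹) • M) h3
    simpa using this
  have hu : IsUnit (w d.edge) := by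
    rw [show d.edge = Sym2.mk d.fst d.snd from rfl]
    exact hw d.adj
  rw [hw0, isUnit_zero_iff] at hu
  exact hnt hu.symm

lemma far_not_both (hT : G.IsTree)
    (hw : ∀ {a b : Fin n}, G.Adj a b → IsUnit (w (Sym2.mk a b)))
    (hnt : (1 : Matrix (Fin s) (Fin s) ℝ) ≠ 0)
    (i : Fin n) (d : G.Dart) (h1 : Far w hT i d) : ¬ Far w hT i d.symm := by
  intro h2
  rw [Far, Dart.edge_symm, Dart.symm_toProd, Prod.fst_swap, Prod.snd_swap] at h2
  rw [Far] at h1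
  rw [h2] at h1
  apply edge_w_add_self_ne_zero w hT hw hnt d
  have := h1
  nth_rewrite 1 [show dd w hT i d.fst = 0 + dd w hT i d.fst by rw [zero_add]] at this
  rw [← add_assoc] at this
  exact (add_left_injective _ this).symm

lemma far_cons (hT : G.IsTree)
    (hw : ∀ {a b : Fin n}, G.Adj a b → IsUnit (w (Sym2.mk a b)))
    (hnt : (1 : Matrix (Fin s) (Fin s) ℝ) ≠ 0)
    (i : Fin n) (d : G.Dart) (h1 : Far w hT i d) :
    tw hT d.fst i = SimpleGraph.Walk.cons d.adj (tw hT d.snd i) := by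
  rcases dichotomy hT d.adj i with hc | hc
  · exact hc
  · exfalso
    apply far_not_both w hT hw hnt i d h1
    rw [Far, Dart.edge_symm, Dart.symm_toProd, Prod.fst_swap, Prod.snd_swap,
      dd_symm w hT i d.snd, dd_symm w hT i d.fst]
    rw [dd, hc, dd]
    simp [SimpleGraph.Dart.edge, Sym2.eq_swap]

lemma far_fst_ne (hT : G.IsTree)
    (hw : ∀ {a b : Fin n}, G.Adj a b → IsUnit (w (Sym2.mk a b)))
    (hnt : (1 : Matrix (Fin s) (Fin s) ℝ) ≠ 0)
    (i : Fin n) (d : G.Dart) (h1 : Far w hT i d) : d.fst ≠ i := by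
  intro hfst
  have hadj : G.Adj i d.snd := hfst ▸ d.adj
  have hEdge : w d.edge = dd w hT i d.snd := by
    rw [dd_adj w hT hadj]
    rw [show d.edge = Sym2.mk d.fst d.snd from rfl, hfst]
  rw [Far, hfst, dd_self, ← hEdge] at h1
  exact edge_w_add_self_ne_zero w hT hw hnt d h1.symm

lemma far_inj (hT : G.IsTree)
    (hw : ∀ {a b : Fin n}, G.Adj a b → IsUnit (w (Sym2.mk a b)))
    (hnt : (1 : Matrix (Fin s) (Fin s) ℝ) ≠ 0)
    (i : Fin n) (d d' : G.Dart) (h1 : Far w hT i d) (h2 : Far w hT i d')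
    (hfst : d.fst = d'.fst) : d = d' := by
  have hc1 := far_cons w hT hw hnt i d h1
  have hc2 := far_cons w hT hw hnt i d' h2
  obtain ⟨⟨a, b⟩, hadj⟩ := d
  obtain ⟨⟨a', b'⟩, hadj'⟩ := d'
  simp only at hfst
  subst hfst
  have heq := hc1.symm.trans hc2
  have hsnd := congrArg (fun p => p.getVert 1) heq
  simp only [SimpleGraph.Walk.getVert_cons_succ, SimpleGraph.Walk.getVert_zero] at hsnd
  subst hsnd
  rfl

lemma far_surj (hT : G.IsTree) (i k : Fin n) (hki : k ≠ i) :
    ∃ d : G.Dart, Far w hT i d ∧ d.fst = k := by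
  obtain ⟨k0, h, q, hq⟩ := SimpleGraph.Walk.exists_eq_cons_of_ne hki (tw hT k i)
  have hqpath : q.IsPath := by
    have := tw_isPath hT k i
    rw [hq] at this
    exact this.of_cons
  have hqtw : q = tw hT k0 i := tw_unique hT q hqpath
  refine ⟨⟨(k, k0), h⟩, ?_, rfl⟩
  rw [Far, dd_symm w hT i k, dd_symm w hT i k0]
  show dd w hT k i = w (Sym2.mk k k0) + dd w hT k0 i
  rw [dd, hq, dd, ← hqtw]
  simp

lemma sum_deg_smul_dd (hT : G.IsTree) (i : Fin n) :
    ∑ k, ((G.degree k : ℝ)) • dd w hT i k = ∑ d : G.Dart, dd w hT i d.fst := by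
  classical
  rw [← Finset.sum_fiberwise_of_maps_to (g := fun d : G.Dart => d.fst)
    (t := (Finset.univ : Finset (Fin n))) (fun d _ => Finset.mem_univ _) (fun d => dd w hT i d.fst)]
  refine Finset.sum_congr rfl fun k _ => ?_
  have h1 : ∀ d ∈ Finset.univ.filter (fun d : G.Dart => d.fst = k),
      dd w hT i d.fst = dd w hT i k := by
    intro d hd
    rw [Finset.mem_filter] at hd
    rw [hd.2]
  rw [Finset.sum_congr rfl h1, Finset.sum_const]
  have hcard : (Finset.univ.filter (fun d : G.Dart => d.fst = k)).card = G.degree k := by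
    have := SimpleGraph.dart_fst_fiber_card_eq_degree G k
    convert this using 2
  rw [hcard, Nat.cast_smul_eq_nsmul]

lemma sum_far_dd (hT : G.IsTree)
    (hw : ∀ {a b : Fin n}, G.Adj a b → IsUnit (w (Sym2.mk a b)))
    (hnt : (1 : Matrix (Fin s) (Fin s) ℝ) ≠ 0) (i : Fin n)
    [DecidablePred (Far w hT i)] :
    ∑ d ∈ Finset.univ.filter (Far w hT i), dd w hT i d.fst = ∑ k, dd w hT i k := by
  classical
  rw [← Finset.sum_erase_add _ _ (Finset.mem_univ i), dd_self, add_zero]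
  refine Finset.sum_bij' (fun d _ => d.fst)
    (fun k hk => (far_surj w hT i k (Finset.mem_erase.mp hk).1).choose) ?_ ?_ ?_ ?_ ?_
  · intro d hd
    rw [Finset.mem_filter] at hd
    exact Finset.mem_erase.mpr ⟨far_fst_ne w hT hw hnt i d hd.2, Finset.mem_univ _⟩
  · intro k hk
    rw [Finset.mem_filter]
    exact ⟨Finset.mem_univ _, ((far_surj w hT i k (Finset.mem_erase.mp hk).1).choose_spec).1⟩
  · intro d hd
    rw [Finset.mem_filter] at hd
    set k := d.fst
    have hspec := (far_surj w hT i k (Finset.mem_erase.mp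
      (Finset.mem_erase.mpr ⟨far_fst_ne w hT hw hnt i d hd.2, Finset.mem_univ _⟩)).1).choose_spec
    exact far_inj w hT hw hnt i _ d hspec.1 hd.2 hspec.2
  · intro k hk
    exact ((far_surj w hT i k (Finset.mem_erase.mp hk).1).choose_spec).2
  · intro d hd
    rfl

lemma sum_far_w (hT : G.IsTree)
    (hw : ∀ {a b : Fin n}, G.Adj a b → IsUnit (w (Sym2.mk a b)))
    (hnt : (1 : Matrix (Fin s) (Fin s) ℝ) ≠ 0) (i : Fin n)
    [DecidablePred (Far w hT i)] :
    ∑ d ∈ Finset.univ.filter (Far w hT i), w d.edge = ∑ e ∈ G.edgeFinset, w e := by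
  classical
  have hsurj : ∀ e ∈ G.edgeFinset, ∃ d : G.Dart, Far w hT i d ∧ d.edge = e := by
    intro e he
    rw [SimpleGraph.mem_edgeFinset] at he
    induction e with
    | _ a b =>
      have hadj : G.Adj a b := he
      rcases far_total w hT i ⟨(a, b), hadj⟩ with hf | hf
      · exact ⟨_, hf, rfl⟩
      · exact ⟨_, hf, by rw [SimpleGraph.Dart.edge_symm]; rfl⟩
  refine Finset.sum_bij' (fun d _ => d.edge) (fun e he => (hsurj e he).choose) ?_ ?_ ?_ ?_ ?_
  · intro d hd
    rw [SimpleGraph.mem_edgeFinset]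
    exact d.edge_mem
  · intro e he
    rw [Finset.mem_filter]
    exact ⟨Finset.mem_univ _, ((hsurj e he).choose_spec).1⟩
  · intro d hd
    rw [Finset.mem_filter] at hd
    have hspec := (hsurj d.edge (by rw [SimpleGraph.mem_edgeFinset]; exact d.edge_mem)).choose_spec
    rcases (SimpleGraph.dart_edge_eq_iff _ _).mp hspec.2 with h | h
    · exact h
    · exfalso
      apply far_not_both w hT hw hnt i d hd.2
      rw [← h]
      exact hspec.1
  · intro e he
    exact ((hsurj e he).choose_spec).2
  · intro d hd
    rfl

lemma sum_two_sub_deg (hT : G.IsTree)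
    (hw : ∀ {a b : Fin n}, G.Adj a b → IsUnit (w (Sym2.mk a b)))
    (hnt : (1 : Matrix (Fin s) (Fin s) ℝ) ≠ 0) (i : Fin n) :
    ∑ k, ((2 : ℝ) - (G.degree k : ℝ)) • dd w hT i k = ∑ e ∈ G.edgeFinset, w e := by
  classical
  have hdart : ∑ d : G.Dart, dd w hT i d.fst =
      (∑ k, dd w hT i k) + (∑ k, dd w hT i k) - ∑ e ∈ G.edgeFinset, w e := by
    rw [← Finset.sum_filter_add_sum_filter_not Finset.univ (Far w hT i)
      (fun d => dd w hT i d.fst)]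
    have h2 : ∑ d ∈ Finset.univ.filter (fun d => ¬ Far w hT i d), dd w hT i d.fst
        = ∑ d ∈ Finset.univ.filter (Far w hT i), dd w hT i d.snd := by
      refine Finset.sum_nbij' SimpleGraph.Dart.symm SimpleGraph.Dart.symm ?_ ?_ ?_ ?_ ?_
      · intro d hd
        rw [Finset.mem_filter] at hd ⊢
        rcases far_total w hT i d with hf | hf
        · exact absurd hf hd.2
        · exact ⟨Finset.mem_univ _, hf⟩
      · intro d hd
        rw [Finset.mem_filter] at hd ⊢
        exact ⟨Finset.mem_univ _, far_not_both w hT hw hnt i d hd.2⟩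
      · intro d _; exact SimpleGraph.Dart.symm_symm d
      · intro d _; exact SimpleGraph.Dart.symm_symm d
      · intro d _; rfl
    have h3 : ∑ d ∈ Finset.univ.filter (Far w hT i), dd w hT i d.snd
        = (∑ d ∈ Finset.univ.filter (Far w hT i), dd w hT i d.fst)
          - ∑ d ∈ Finset.univ.filter (Far w hT i), w d.edge := by
      rw [← Finset.sum_sub_distrib]
      refine Finset.sum_congr rfl fun d hd => ?_
      rw [Finset.mem_filter] at hd
      have := hd.2
      rw [Far] at this
      rw [this]
      abel
    rw [h2, h3, sum_far_dd w hT hw hnt i, sum_far_w w hT hw hnt i]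
    abel
  have hdeg := sum_deg_smul_dd w hT i
  have hsplit : ∑ k, ((2 : ℝ) - (G.degree k : ℝ)) • dd w hT i k
      = (2 : ℝ) • (∑ k, dd w hT i k) - ∑ k, ((G.degree k : ℝ)) • dd w hT i k := by
    rw [Finset.smul_sum, ← Finset.sum_sub_distrib]
    exact Finset.sum_congr rfl fun k _ => by rw [sub_smul]
  rw [hsplit, hdeg, hdart, two_smul]
  abel

lemma main_blocks (hT : G.IsTree)
    (hw : ∀ {a b : Fin n}, G.Adj a b → IsUnit (w (Sym2.mk a b)))
    (hnt : (1 : Matrix (Fin s) (Fin s) ℝ) ≠ 0) :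
    (Matrix.of fun i j => dd w hT i j) * ((Matrix.of fun i j => Lb G w i j) *
        (Matrix.of fun i j => dd w hT i j)) =
      (Matrix.of fun _ _ => ∑ e ∈ G.edgeFinset, w e)
        - (2 : ℝ) • (Matrix.of fun i j => dd w hT i j) := by
  classical
  have hLD : (Matrix.of fun i j => Lb G w i j) * (Matrix.of fun i j => dd w hT i j) =
      Matrix.of fun k j => ((if k = j then (0 : ℝ) else 2) - (G.degree k : ℝ)) •
        (1 : Matrix (Fin s) (Fin s) ℝ) := by
    refine Matrix.ext fun k j => ?_
    rw [Matrix.mul_apply]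
    exact Lb_mul_dd w hT hw k j
  rw [hLD]
  refine Matrix.ext fun i j => ?_
  rw [Matrix.mul_apply]
  have hterm : ∀ k, (Matrix.of fun i j => dd w hT i j) i k *
      (Matrix.of (fun k j => ((if k = j then (0 : ℝ) else 2) - (G.degree k : ℝ)) •
        (1 : Matrix (Fin s) (Fin s) ℝ))) k j
      = ((2 : ℝ) - (G.degree k : ℝ)) • dd w hT i k
        - (if k = j then (2 : ℝ) • dd w hT i k else 0) := by
    intro k
    show dd w hT i k * (((if k = j then (0 : ℝ) else 2) - (G.degree k : ℝ)) • 1)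
      = ((2 : ℝ) - (G.degree k : ℝ)) • dd w hT i k - (if k = j then (2 : ℝ) • dd w hT i k else 0)
    rw [Matrix.mul_smul, Matrix.mul_one]
    by_cases hkj : k = j
    · rw [if_pos hkj, if_pos hkj, sub_smul, sub_smul, zero_smul]
      abel
    · rw [if_neg hkj, if_neg hkj, sub_zero]
  rw [Finset.sum_congr rfl fun k _ => hterm k, Finset.sum_sub_distrib,
    Finset.sum_ite_eq' Finset.univ j, if_pos (Finset.mem_univ j),
    sum_two_sub_deg w hT hw hnt i]
  show _ = (∑ e ∈ G.edgeFinset, w e) - ((2 : ℝ) • Matrix.of (fun i j => dd w hT i j)) i j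
  rw [Matrix.smul_apply]
  rfl

lemma Lm_mul_Jm : (Matrix.of fun i j => Lb G w i j) *
    (Matrix.of fun _ _ : Fin n => ∑ e ∈ G.edgeFinset, w e) = 0 := by
  refine Matrix.ext fun i j => ?_
  rw [Matrix.mul_apply]
  show ∑ k, Lb G w i k * (∑ e ∈ G.edgeFinset, w e) = 0
  rw [← Finset.sum_mul, Lb_row_sum, Matrix.zero_mul]

lemma Jm_mul_Lm : (Matrix.of fun _ _ : Fin n => ∑ e ∈ G.edgeFinset, w e) *
    (Matrix.of fun i j => Lb G w i j) = 0 := by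
  refine Matrix.ext fun i j => ?_
  rw [Matrix.mul_apply]
  show ∑ k, (∑ e ∈ G.edgeFinset, w e) * Lb G w k j = 0
  rw [← Finset.mul_sum, Lb_col_sum, Matrix.mul_zero]

end TreeDistAux

open TreeDistAux

/-- Let `T` be a tree on `n` vertices with `s × s` real matrix edge weights such
that the distance matrix `D` of `T` is invertible, and let `L` be the Laplacian formed from the
inverses of the weights, and `J` the all-ones `n × n` matrix.  Then `D⁻¹ - L` is invertible and
`(D⁻¹ - L)⁻¹ = (1/3) D + (1/3) J ⊗ (∑ᵢ Wᵢ)`. -/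
theorem inv_distInv_sub_lap {n s : ℕ}
    (G : SimpleGraph (Fin n)) [DecidableRel G.Adj] (hT : G.IsTree)
    (w : Sym2 (Fin n) → Matrix (Fin s) (Fin s) ℝ)
    (D : Matrix (Fin n × Fin s) (Fin n × Fin s) ℝ)
    (hD : ∀ (i j : Fin n) (p : G.Walk i j), p.IsPath →
      ∀ a b, D (i, a) (j, b) = ((p.edges.map w).sum) a b)
    (hDinv : IsUnit D) :
    IsUnit (D⁻¹ - matLap G w) ∧
      (D⁻¹ - matLap G w)⁻¹ = ((1/3) : ℝ) • D +
        ((1/3) : ℝ) • ((Matrix.of fun _ _ => (1 : ℝ) : Matrix (Fin n) (Fin n) ℝ) ⊗ₖ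
          (∑ e ∈ G.edgeFinset, w e)) := by

  classical
  rcases Nat.eq_zero_or_pos s with hs | hs
  · subst hs
    have hsub : ∀ A B : Matrix (Fin n × Fin 0) (Fin n × Fin 0) ℝ, A = B :=
      fun A B => Matrix.ext (fun i _ => i.2.elim0)
    exact ⟨(hsub (D⁻¹ - matLap G w) 1) ▸ isUnit_one, hsub _ _⟩
  · have hnt : (1 : Matrix (Fin s) (Fin s) ℝ) ≠ 0 := by
      intro h
      have := congrFun (congrFun h ⟨0, hs⟩) ⟨0, hs⟩
      rw [Matrix.one_apply_eq, Matrix.zero_apply] at this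
      exact one_ne_zero this
    have hDd : ∀ (i j : Fin n) (a b : Fin s), D (i, a) (j, b) = dd w hT i j a b :=
      fun i j a b => hD i j (tw hT i j) (tw_isPath hT i j) a b
    have hw : ∀ {a b : Fin n}, G.Adj a b → IsUnit (w (Sym2.mk a b)) :=
      fun {a b} h => w_unit w hT D hDd hDinv h
    set E := Matrix.compRingEquiv (Fin n) (Fin s) ℝ with hE
    set Dm := (Matrix.of fun i j => dd w hT i j) with hDm
    set Lm := (Matrix.of fun i j => Lb G w i j) with hLm
    set Jm := (Matrix.of fun _ _ : Fin n => ∑ e ∈ G.edgeFinset, w e) with hJm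
    set JS := ((Matrix.of fun _ _ => (1 : ℝ) : Matrix (Fin n) (Fin n) ℝ) ⊗ₖ
      (∑ e ∈ G.edgeFinset, w e)) with hJS
    have hED : E Dm = D := by
      refine Matrix.ext fun p q => ?_
      obtain ⟨i, a⟩ := p; obtain ⟨j, b⟩ := q
      rw [hDd i j a b]
      rfl
    have hEL : E Lm = matLap G w := by
      refine Matrix.ext fun p q => ?_
      obtain ⟨i, a⟩ := p; obtain ⟨j, b⟩ := q
      show Lb G w i j a b = matLap G w (i, a) (j, b)
      rw [Lb, matLap]
      simp only [Matrix.of_apply]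
      split_ifs <;> simp
    have hEJ : E Jm = JS := by
      refine Matrix.ext fun p q => ?_
      obtain ⟨i, a⟩ := p; obtain ⟨j, b⟩ := q
      show (∑ e ∈ G.edgeFinset, w e) a b = _
      simp [hJS, Matrix.kroneckerMap_apply]
    have hEsmul : ∀ (r : ℝ) (X : Matrix (Fin n) (Fin n) (Matrix (Fin s) (Fin s) ℝ)),
        E (r • X) = r • E X := fun r X => by
      refine Matrix.ext fun p q => ?_
      rfl
    have hDLD : D * (matLap G w * D) = JS - (2 : ℝ) • D := by
      have h0 := congrArg E (main_blocks w hT hw hnt)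
      rw [_root_.map_mul, _root_.map_mul, map_sub, hEsmul, hED, hEL, hEJ] at h0
      exact h0
    have hLJ : matLap G w * JS = 0 := by
      have h0 := congrArg E (Lm_mul_Jm w (G := G))
      rw [_root_.map_mul, hEL, hEJ, map_zero] at h0
      exact h0
    have hJL : JS * matLap G w = 0 := by
      have h0 := congrArg E (Jm_mul_Lm w (G := G))
      rw [_root_.map_mul, hEL, hEJ, map_zero] at h0
      exact h0
    have hdet : IsUnit D.det := (Matrix.isUnit_iff_isUnit_det D).mp hDinv
    have hDD : D * D⁻¹ = 1 := Matrix.mul_nonsing_inv D hdet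
    have hDDl : D⁻¹ * D = 1 := Matrix.nonsing_inv_mul D hdet
    set L := matLap G w with hL
    set N := ((1/3) : ℝ) • D + ((1/3) : ℝ) • JS with hN
    have h1 : (D⁻¹ - L) * N = 1 := by
      apply hDinv.mul_left_cancel
      have hLN : L * N = ((1/3) : ℝ) • (L * D) := by
        rw [hN, mul_add, Matrix.mul_smul, Matrix.mul_smul, hLJ, smul_zero, add_zero]
      calc D * ((D⁻¹ - L) * N) = (D * D⁻¹ - D * L) * N := by rw [← mul_assoc, mul_sub]
        _ = (1 - D * L) * N := by rw [hDD]
        _ = N - D * (L * N) := by rw [sub_mul, one_mul, mul_assoc]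
        _ = N - ((1/3) : ℝ) • (D * (L * D)) := by rw [hLN, Matrix.mul_smul]
        _ = N - ((1/3) : ℝ) • (JS - (2 : ℝ) • D) := by rw [hDLD]
        _ = D := by rw [hN]; module
        _ = D * 1 := (mul_one D).symm
    have h2 : N * (D⁻¹ - L) = 1 := by
      apply hDinv.mul_right_cancel
      have hNLD : N * (L * D) = ((1/3) : ℝ) • (D * (L * D)) := by
        have hJLD : JS * (L * D) = 0 := by
          rw [← mul_assoc, hJL, Matrix.zero_mul]
        rw [hN, add_mul, Matrix.smul_mul, Matrix.smul_mul, hJLD, smul_zero, add_zero]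
      calc (N * (D⁻¹ - L)) * D = N * ((D⁻¹ - L) * D) := mul_assoc _ _ _
        _ = N * (1 - L * D) := by rw [sub_mul, hDDl]
        _ = N - N * (L * D) := by rw [mul_sub, mul_one]
        _ = N - ((1/3) : ℝ) • (D * (L * D)) := by rw [hNLD]
        _ = N - ((1/3) : ℝ) • (JS - (2 : ℝ) • D) := by rw [hDLD]
        _ = D := by rw [hN]; module
        _ = 1 * D := (one_mul D).symm
    exact ⟨⟨⟨D⁻¹ - L, N, h1, h2⟩, rfl⟩, Matrix.inv_eq_right_inv h1⟩
end
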